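/- Let X be an n × d real matrix and Y ∈ ℝⁿ, let λ > 0, let s ≥ 0 and let v ∈ ℝᵈ be a unit vector with (XᵀX)v = s·v. Let y_p ∈ ℝ, and let X_p be the (n+1) × d matrix obtained from X by appending v as a new row, let Y₀ ∈ ℝ^{n+1} be Y with the entry y_p appended, and let Y₁ ∈ ℝ^{n+1} be Y with the entry −y_p appended. Then (λ·I + X_pᵀX_p)⁻¹ X_pᵀ Y₀ − (λ·I + X_pᵀX_p)⁻¹ X_pᵀ Y₁ = (2·y_p/(λ + s + 1)) · v. -/

import Mathlib

open Matrix

lemma snoc_mulVec {n d : ℕ} (X : Matrix (Fin n) (Fin d) ℝ) (v w : Fin d → ℝ) :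
    (Matrix.of (Fin.snoc X v)).mulVec w = Fin.snoc (X.mulVec w) (v ⬝ᵥ w) := by
  ext i
  refine Fin.lastCases ?_ ?_ i <;>
    simp [Matrix.mulVec, dotProduct, Fin.snoc]

lemma snocT_mulVec {n d : ℕ} (X : Matrix (Fin n) (Fin d) ℝ) (v : Fin d → ℝ)
    (u : Fin n → ℝ) (a : ℝ) :
    (Matrix.of (Fin.snoc X v))ᵀ.mulVec (Fin.snoc u a) = Xᵀ.mulVec u + a • v := by
  ext j
  simp [Matrix.mulVec, dotProduct, Fin.sum_univ_castSucc, mul_comm, Fin.snoc]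

/-- Separation of the ridge-regression solutions for the two poisoned datasets:
appending the unit eigenvector `v` of `XᵀX` (with smallest eigenvalue `s`) as a row
with labels `y_p` and `−y_p` yields solutions differing by `(2y_p/(lam+s+1))•v`. -/
theorem stmt_10 {n d : ℕ} (X : Matrix (Fin n) (Fin d) ℝ) (Y : Fin n → ℝ)
    (lam : ℝ) (hlam : 0 < lam) (s : ℝ) (hs : 0 ≤ s)
    (v : Fin d → ℝ) (hv : v ⬝ᵥ v = 1) (heig : (Xᵀ * X).mulVec v = s • v)
    (yp : ℝ) (Xp : Matrix (Fin (n + 1)) (Fin d) ℝ)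
    (hXp : Xp = Matrix.of (Fin.snoc X v))
    (Y₀ Y₁ : Fin (n + 1) → ℝ) (hY₀ : Y₀ = Fin.snoc Y yp) (hY₁ : Y₁ = Fin.snoc Y (-yp)) :
    (lam • (1 : Matrix (Fin d) (Fin d) ℝ) + Xpᵀ * Xp)⁻¹.mulVec (Xpᵀ.mulVec Y₀) -
        (lam • (1 : Matrix (Fin d) (Fin d) ℝ) + Xpᵀ * Xp)⁻¹.mulVec (Xpᵀ.mulVec Y₁) =
      (2 * yp / (lam + s + 1)) • v := by
  subst hXp hY₀ hY₁
  set Xp : Matrix (Fin (n + 1)) (Fin d) ℝ := Matrix.of (Fin.snoc X v) with hXp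
  set A : Matrix (Fin d) (Fin d) ℝ := lam • (1 : Matrix (Fin d) (Fin d) ℝ) + Xpᵀ * Xp with hA
  have hAv : A.mulVec v = (lam + s + 1) • v := by
    rw [hA, add_mulVec, smul_mulVec, one_mulVec, ← mulVec_mulVec, hXp,
      snoc_mulVec, snocT_mulVec, mulVec_mulVec, heig, hv]
    ext i
    simp
    ring
  have hpd : A.PosDef := by
    apply Matrix.PosDef.add_posSemidef
    · rw [smul_one_eq_diagonal]
      exact Matrix.PosDef.diagonal fun _ => hlam
    · have := posSemidef_conjTranspose_mul_self Xp
      simpa [Matrix.conjTranspose_eq_transpose_of_trivial] using this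
  have hdet : IsUnit A.det := hpd.det_pos.ne'.isUnit
  have hne : lam + s + 1 ≠ 0 := by positivity
  have key : A.mulVec ((2 * yp / (lam + s + 1)) • v) = (2 * yp) • v := by
    rw [mulVec_smul, hAv, smul_smul, div_mul_cancel₀ _ hne]
  have hdiff : Xpᵀ.mulVec (Fin.snoc Y yp) - Xpᵀ.mulVec (Fin.snoc Y (-yp))
      = (2 * yp) • v := by
    rw [hXp, snocT_mulVec, snocT_mulVec]
    ext i
    simp
    ring
  rw [← mulVec_sub, hdiff, ← key, mulVec_mulVec, nonsing_inv_mul A hdet, one_mulVec]
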